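/- Let A be an n×n complex matrix with numerical radius r(A) = sup{ |x*Ax| : x ∈ ℂⁿ, ‖x‖ = 1 }. Then for every natural number k, ‖A^k‖ ≤ 2·(r(A))^k, where ‖·‖ denotes the spectral norm (the operator norm induced by the Euclidean vector norm). -/

import Mathlib

open Matrix Finset Polynomial

section BergerAux

lemma polyDerivProd {R : Type*} [CommRing R] {ι : Type*} [DecidableEq ι]
    (s : Finset ι) (f : ι → R[X]) :
    derivative (∏ i ∈ s, f i) =
      ∑ i ∈ s, (∏ j ∈ s.erase i, f j) * derivative (f i) := by
  rw [Finset.prod_eq_multiset_prod, Polynomial.derivative_prod, Finset.sum_eq_multiset_sum]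
  congr 1

lemma scalar_prod_one_sub {k : ℕ} (hk : 0 < k) {ω : ℂ} (hω : IsPrimitiveRoot ω k) (t : ℂ) :
    ∏ j ∈ range k, (1 - ω ^ j * t) = 1 - t ^ k := by
  have base := X_pow_sub_C_eq_prod hω hk (one_pow k)
  have base' := X_pow_sub_C_eq_prod hω.inv hk (one_pow k)
  have h0 : ∏ j ∈ range k, (-(ω ^ j)) = -1 := by
    have := congrArg (Polynomial.eval 0) base
    simpa [eval_prod, zero_pow hk.ne', zero_sub] using this.symm
  have ht : ∏ j ∈ range k, (t - (ω⁻¹) ^ j) = t ^ k - 1 := by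
    have := congrArg (Polynomial.eval t) base'
    simpa [eval_prod] using this.symm
  have hfac : ∀ j ∈ range k, (1 - ω ^ j * t) = (-(ω ^ j)) * (t - (ω⁻¹) ^ j) := by
    intro j _
    have hωj : ω ^ j * (ω⁻¹) ^ j = 1 := by
      rw [← mul_pow, mul_inv_cancel₀ (hω.ne_zero hk.ne'), one_pow]
    linear_combination (-1 : ℂ) * hωj
  rw [Finset.prod_congr rfl hfac, Finset.prod_mul_distrib, h0, ht]
  ring

lemma poly_prod_one_sub {k : ℕ} (hk : 0 < k) {ω : ℂ} (hω : IsPrimitiveRoot ω k) :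
    ∏ j ∈ range k, (1 - C (ω ^ j) * X) = 1 - X ^ k := by
  apply Polynomial.funext
  intro t
  simpa [eval_prod] using scalar_prod_one_sub hk hω t

lemma poly_sum_prod {k : ℕ} (hk : 0 < k) {ω : ℂ} (hω : IsPrimitiveRoot ω k) :
    ∑ j ∈ range k, ∏ i ∈ (range k).erase j, (1 - C (ω ^ i) * X) = C (k : ℂ) := by
  have poly1 := poly_prod_one_sub hk hω
  set Q : ℂ[X] := ∑ j ∈ range k, ∏ i ∈ (range k).erase j, (1 - C (ω ^ i) * X) with hQ
  have key : Q - C (k : ℂ) = 0 := by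
    apply Polynomial.eq_zero_of_natDegree_lt_card_of_eval_eq_zero _
      (f := fun j : Fin k => (ω⁻¹) ^ (j : ℕ))
    · intro a b hab
      exact Fin.ext (hω.inv.pow_inj a.isLt b.isLt hab)
    · rintro ⟨j, hj⟩
      simp only [eval_sub, eval_C, sub_eq_zero]
      set t : ℂ := (ω⁻¹) ^ j with hts
      have hzero : ∀ j' ∈ range k, j' ≠ j →
          eval t (∏ i ∈ (range k).erase j', (1 - C (ω ^ i) * X)) = 0 := by
        intro j' _ hj'
        rw [eval_prod]
        apply Finset.prod_eq_zero (i := j)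
          (Finset.mem_erase.mpr ⟨Ne.symm hj', Finset.mem_range.mpr hj⟩)
        have : ω ^ j * t = 1 := by
          rw [hts, ← mul_pow, mul_inv_cancel₀ (hω.ne_zero hk.ne'), one_pow]
        simp [this]
      have hderiv := congrArg (Polynomial.eval t) (congrArg derivative poly1)
      rw [polyDerivProd] at hderiv
      have hd1 : ∀ i : ℕ, derivative (1 - C (ω ^ i) * X) = - C (ω ^ i) := by
        intro i
        rw [derivative_sub, derivative_one, derivative_C_mul, derivative_X, mul_one, zero_sub]
      simp only [hd1, derivative_sub, derivative_one, derivative_X_pow, eval_finset_sum,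
        eval_mul, eval_neg, eval_C, zero_sub, eval_pow, eval_X] at hderiv
      rw [Finset.sum_eq_single_of_mem j (Finset.mem_range.mpr hj)] at hderiv
      swap
      · intro j' hj' hne
        rw [hzero j' hj' hne, zero_mul]
      have hterm : eval t (∏ i ∈ (range k).erase j, (1 - C (ω ^ i) * X)) * (ω ^ j) =
          (k : ℂ) * t ^ (k - 1) := by linear_combination -hderiv
      have hpow : t ^ (k - 1) * (ω⁻¹) ^ j = 1 := by
        rw [hts, ← pow_mul, ← pow_add]
        have : j * (k - 1) + j = j * k := by
          cases k with
          | zero => omega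
          | succ m => simp [Nat.succ_sub_one]; ring
        rw [this, pow_mul', hω.inv.pow_eq_one, one_pow]
      have hQj : eval t (∏ i ∈ (range k).erase j, (1 - C (ω ^ i) * X)) = (k : ℂ) := by
        have h2 := congrArg (· * (ω⁻¹) ^ j) hterm
        rw [mul_assoc, ← mul_pow, mul_inv_cancel₀ (hω.ne_zero hk.ne'), one_pow, mul_one,
          mul_assoc, hpow, mul_one] at h2
        exact h2
      rw [hQ, eval_finset_sum, Finset.sum_eq_single_of_mem j (Finset.mem_range.mpr hj)]
      · exact hQj
      · intro j' hj' hne; exact hzero j' hj' hne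
    · have hdeg : Q.natDegree ≤ k - 1 := by
        apply Polynomial.natDegree_sum_le_of_forall_le
        intro j hj
        calc (∏ i ∈ (range k).erase j, (1 - C (ω ^ i) * X)).natDegree
            ≤ ∑ i ∈ (range k).erase j, (1 - C (ω ^ i) * X).natDegree :=
              Polynomial.natDegree_prod_le _ _
          _ ≤ ∑ i ∈ (range k).erase j, 1 := by
              apply Finset.sum_le_sum
              intro i _
              refine le_trans (Polynomial.natDegree_sub_le _ _) ?_
              simp only [natDegree_one, max_le_iff]
              constructor
              · omega
              · exact le_trans (Polynomial.natDegree_C_mul_le _ _) (by simp)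
          _ = ((range k).erase j).card := by simp
          _ ≤ k - 1 := by
              rw [Finset.card_erase_of_mem (Finset.mem_range.mpr (Finset.mem_range.mp hj))]
              simp
      have : (Q - C (k : ℂ)).natDegree ≤ k - 1 := by
        refine le_trans (Polynomial.natDegree_sub_le _ _) ?_
        simp [hdeg]
      simpa [Fintype.card_fin] using lt_of_le_of_lt this (by omega)
  exact sub_eq_zero.mp key

noncomputable def Sq {n : ℕ} (v : Fin n → ℂ) : ℝ := ∑ i, Complex.normSq (v i)

lemma Sq_nonneg {n : ℕ} (v : Fin n → ℂ) : 0 ≤ Sq v :=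
  Finset.sum_nonneg fun i _ => Complex.normSq_nonneg _

lemma dot_star_self {n : ℕ} (v : Fin n → ℂ) : star v ⬝ᵥ v = (Sq v : ℂ) := by
  simp only [dotProduct, Pi.star_apply, Sq, Complex.ofReal_sum]
  exact Finset.sum_congr rfl fun i _ => (Complex.normSq_eq_conj_mul_self).symm

lemma Sq_pos {n : ℕ} {v : Fin n → ℂ} (hv : v ≠ 0) : 0 < Sq v := by
  rcases (Sq_nonneg v).lt_or_eq with h | h
  · exact h
  · exfalso; apply hv
    funext i
    have := (Finset.sum_eq_zero_iff_of_nonneg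
      (fun i _ => Complex.normSq_nonneg (v i))).mp h.symm i (Finset.mem_univ i)
    simpa using Complex.normSq_eq_zero.mp this

/-- numerical radius bound predicate -/
def NRle {n : ℕ} (A : Matrix (Fin n) (Fin n) ℂ) (c : ℝ) : Prop :=
  ∀ v : Fin n → ℂ, ‖star v ⬝ᵥ A.mulVec v‖ ≤ c * Sq v

variable {n : ℕ}

lemma quad_one_sub_smul (B : Matrix (Fin n) (Fin n) ℂ) (w : ℂ) (v : Fin n → ℂ) :
    star v ⬝ᵥ (1 - w • B).mulVec v = (Sq v : ℂ) - w * (star v ⬝ᵥ B.mulVec v) := by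
  rw [sub_mulVec, one_mulVec, dotProduct_sub, dot_star_self, smul_mulVec,
    dotProduct_smul, smul_eq_mul]

/-- positivity predicate for the real part of the quadratic form -/
def PosRe (M : Matrix (Fin n) (Fin n) ℂ) : Prop :=
  ∀ v : Fin n → ℂ, 0 ≤ (star v ⬝ᵥ M.mulVec v).re

lemma posRe_one_sub (B : Matrix (Fin n) (Fin n) ℂ) (hB : NRle B 1) {w : ℂ}
    (hw : ‖w‖ ≤ 1) : PosRe (1 - w • B) := by
  intro v
  rw [quad_one_sub_smul]
  have h1 : (w * (star v ⬝ᵥ B.mulVec v)).re ≤ Sq v := by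
    calc (w * (star v ⬝ᵥ B.mulVec v)).re ≤ ‖w * (star v ⬝ᵥ B.mulVec v)‖ :=
          Complex.re_le_norm _
      _ = ‖w‖ * ‖star v ⬝ᵥ B.mulVec v‖ := norm_mul _ _
      _ ≤ 1 * (1 * Sq v) := by
          apply mul_le_mul hw (hB v) (norm_nonneg _) zero_le_one
      _ = Sq v := by ring
  simp only [Complex.sub_re, Complex.ofReal_re]
  linarith

lemma isUnit_det_one_sub (B : Matrix (Fin n) (Fin n) ℂ) (hB : NRle B 1) {w : ℂ}
    (hw : ‖w‖ < 1) : IsUnit (1 - w • B).det := by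
  rw [isUnit_iff_ne_zero]
  intro hdet
  obtain ⟨v, hv, hv0⟩ := (Matrix.exists_mulVec_eq_zero_iff).mpr hdet
  have h := quad_one_sub_smul B w v
  rw [hv0] at h
  simp only [dotProduct_zero] at h
  have h2 : (Sq v : ℂ) = w * (star v ⬝ᵥ B.mulVec v) := by linear_combination -h
  have h3 : Sq v = ‖w * (star v ⬝ᵥ B.mulVec v)‖ := by
    rw [← h2]; simp [Complex.norm_real, abs_of_nonneg (Sq_nonneg v)]
  have h4 : ‖w * (star v ⬝ᵥ B.mulVec v)‖ < 1 * Sq v := by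
    rw [norm_mul]
    calc ‖w‖ * ‖star v ⬝ᵥ B.mulVec v‖
        ≤ ‖w‖ * (1 * Sq v) := by
          apply mul_le_mul_of_nonneg_left (hB v) (norm_nonneg _)
      _ < 1 * (1 * Sq v) := by
          apply mul_lt_mul_of_pos_right hw
          simpa using Sq_pos hv
      _ = 1 * Sq v := by ring
  rw [← h3] at h4
  linarith [Sq_pos hv]

lemma posRe_inv {M : Matrix (Fin n) (Fin n) ℂ} (hdet : IsUnit M.det) (hM : PosRe M) :
    PosRe M⁻¹ := by
  intro v
  have hv : M.mulVec (M⁻¹.mulVec v) = v := by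
    rw [mulVec_mulVec, Matrix.mul_nonsing_inv M hdet, one_mulVec]
  have key : star v ⬝ᵥ M⁻¹.mulVec v
      = star (M.mulVec (M⁻¹.mulVec v)) ⬝ᵥ (M⁻¹.mulVec v) := by rw [hv]
  rw [key, Matrix.star_dotProduct]
  have hre : (star (star (M⁻¹.mulVec v) ⬝ᵥ M.mulVec (M⁻¹.mulVec v))).re
      = (star (M⁻¹.mulVec v) ⬝ᵥ M.mulVec (M⁻¹.mulVec v)).re := Complex.conj_re _
  rw [hre]
  exact hM _

lemma sum_mulVec' {ι : Type*} (s : Finset ι) (f : ι → Matrix (Fin n) (Fin n) ℂ)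
    (v : Fin n → ℂ) : (∑ j ∈ s, f j).mulVec v = ∑ j ∈ s, (f j).mulVec v :=
  map_sum (Matrix.mulVec.addMonoidHomLeft v) f s

lemma dotProduct_sum' {ι : Type*} (s : Finset ι) (u : Fin n → ℂ) (f : ι → Fin n → ℂ) :
    u ⬝ᵥ (∑ j ∈ s, f j) = ∑ j ∈ s, u ⬝ᵥ f j := by
  simp only [dotProduct, Finset.sum_apply, Finset.mul_sum]
  exact Finset.sum_comm

/-- Berger's power inequality, in quadratic form. -/
theorem nrle_pow {B : Matrix (Fin n) (Fin n) ℂ} (hB : NRle B 1) {k : ℕ} (hk : 0 < k) :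
    NRle (B ^ k) 1 := by
  -- the primitive root
  obtain ⟨ω, hω⟩ : ∃ ω : ℂ, IsPrimitiveRoot ω k := ⟨_, Complex.isPrimitiveRoot_exp k hk.ne'⟩
  have habsω : ∀ j : ℕ, ‖ω ^ j‖ = 1 := by
    intro j
    have h1 : ‖ω‖ = 1 := by
      exact hω.norm'_eq_one hk.ne'
    rw [norm_pow, h1, one_pow]
  have poly1 := poly_prod_one_sub hk hω
  have poly2 := poly_sum_prod hk hω
  -- main positivity step
  have main : ∀ u : ℂ, ‖u‖ < 1 → PosRe (1 - u • (B ^ k)) := by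
    intro u hu
    obtain ⟨z, hz⟩ : ∃ z : ℂ, z ^ k = u := IsAlgClosed.exists_pow_nat_eq u hk
    have hzabs : ‖z‖ < 1 := by
      by_contra hge
      push_neg at hge
      have h1 : (1 : ℝ) ≤ ‖z‖ ^ k := one_le_pow₀ hge
      rw [← norm_pow, hz] at h1
      linarith
    set ψ : ℂ[X] →ₐ[ℂ] Matrix (Fin n) (Fin n) ℂ := Polynomial.aeval (z • B) with hψ
    have hfac : ∀ i : ℕ, ψ (1 - C (ω ^ i) * X) = 1 - (ω ^ i * z) • B := by
      intro i
      rw [hψ, map_sub, _root_.map_one, _root_.map_mul, aeval_C, aeval_X, ← Algebra.smul_def,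
        smul_smul]
    set D : Matrix (Fin n) (Fin n) ℂ := ψ (∏ j ∈ range k, (1 - C (ω ^ j) * X)) with hD
    have habsj : ∀ j : ℕ, ‖ω ^ j * z‖ < 1 := by
      intro j
      rw [norm_mul, habsω, one_mul]
      exact hzabs
    have hD' : D = 1 - u • B ^ k := by
      rw [hD, poly1, map_sub, _root_.map_one, map_pow, aeval_X, _root_.smul_pow, hz]
    have hMdet : ∀ j : ℕ, IsUnit (1 - (ω ^ j * z) • B).det :=
      fun j => isUnit_det_one_sub B hB (habsj j)
    have hDdet : IsUnit D.det := by
      have : ∀ s : Finset ℕ, IsUnit (ψ (∏ j ∈ s, (1 - C (ω ^ j) * X))).det := by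
        intro s
        induction s using Finset.induction_on with
        | empty => simp
        | @insert a s hnotmem ih =>
            rw [Finset.prod_insert hnotmem, _root_.map_mul, Matrix.det_mul, hfac]
            exact (hMdet _).mul ih
      exact this (range k)
    have hsplit : ∀ j ∈ range k, D = (1 - (ω ^ j * z) • B) *
        ψ (∏ i ∈ (range k).erase j, (1 - C (ω ^ i) * X)) := by
      intro j hj
      rw [hD, ← Finset.mul_prod_erase _ _ hj, _root_.map_mul, hfac]
    have hsum : ∑ j ∈ range k, ψ (∏ i ∈ (range k).erase j, (1 - C (ω ^ i) * X))
        = (k : ℂ) • (1 : Matrix (Fin n) (Fin n) ℂ) := by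
      rw [← map_sum, poly2, hψ, aeval_C, Algebra.algebraMap_eq_smul_one]
    have hMinv : ∀ j ∈ range k, (1 - (ω ^ j * z) • B)⁻¹ * D
        = ψ (∏ i ∈ (range k).erase j, (1 - C (ω ^ i) * X)) := by
      intro j hj
      rw [hsplit j hj, ← Matrix.mul_assoc, Matrix.nonsing_inv_mul _ (hMdet j), Matrix.one_mul]
    have hkey : ∑ j ∈ range k, (1 - (ω ^ j * z) • B)⁻¹ = (k : ℂ) • D⁻¹ := by
      have hsuminv : (∑ j ∈ range k, (1 - (ω ^ j * z) • B)⁻¹) * D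
          = (k : ℂ) • (1 : Matrix (Fin n) (Fin n) ℂ) := by
        rw [Finset.sum_mul, Finset.sum_congr rfl hMinv, hsum]
      have h2 := congrArg (· * D⁻¹) hsuminv
      rw [Matrix.mul_assoc, Matrix.mul_nonsing_inv _ hDdet, Matrix.mul_one,
        Matrix.smul_mul, Matrix.one_mul] at h2
      exact h2
    have hPDinv : PosRe D⁻¹ := by
      intro w
      have h1 : ∀ j ∈ range k, 0 ≤ (star w ⬝ᵥ ((1 - (ω ^ j * z) • B)⁻¹).mulVec w).re :=
        fun j _ => posRe_inv (hMdet j) (posRe_one_sub B hB (le_of_lt (habsj j))) w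
      have h2 : (star w ⬝ᵥ ((∑ j ∈ range k, (1 - (ω ^ j * z) • B)⁻¹).mulVec w)).re
          = ∑ j ∈ range k, (star w ⬝ᵥ ((1 - (ω ^ j * z) • B)⁻¹).mulVec w).re := by
        rw [sum_mulVec', dotProduct_sum', Complex.re_sum]
      have h3 : 0 ≤ (star w ⬝ᵥ ((∑ j ∈ range k, (1 - (ω ^ j * z) • B)⁻¹).mulVec w)).re := by
        rw [h2]
        exact Finset.sum_nonneg h1
      rw [hkey] at h3
      rw [Matrix.smul_mulVec, dotProduct_smul] at h3
      have hkpos : (0 : ℝ) < (k : ℝ) := by exact_mod_cast hk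
      have : ((k : ℂ) • (star w ⬝ᵥ D⁻¹.mulVec w)).re
          = (k : ℝ) * (star w ⬝ᵥ D⁻¹.mulVec w).re := by
        rw [smul_eq_mul]
        simp [Complex.mul_re]
      rw [this] at h3
      nlinarith
    have hPD : PosRe D := by
      have h := posRe_inv (Matrix.isUnit_nonsing_inv_det D hDdet) hPDinv
      rwa [Matrix.nonsing_inv_nonsing_inv D hDdet] at h
    rwa [hD'] at hPD
  -- from positivity to numerical radius
  intro v
  set q : ℂ := star v ⬝ᵥ (B ^ k).mulVec v with hq
  by_cases hq0 : q = 0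
  · rw [hq0]
    simpa using Sq_nonneg v
  · set a : ℝ := ‖q‖ with ha
    have ha0 : 0 < a := by simpa [ha] using norm_pos_iff.mpr hq0
    have hle : ∀ t : ℝ, 0 ≤ t → t < 1 → t * a ≤ Sq v := by
      intro t ht0 ht1
      set u : ℂ := ((t / a : ℝ) : ℂ) * (starRingEnd ℂ) q with hu
      have huabs : ‖u‖ < 1 := by
        rw [hu, norm_mul, Complex.norm_real, Real.norm_eq_abs, Complex.norm_conj, ← ha,
          abs_of_nonneg (by positivity), div_mul_cancel₀ _ ha0.ne']
        exact ht1
      have := main u huabs v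
      rw [quad_one_sub_smul, ← hq] at this
      have hre : (u * q).re = t * a := by
        rw [hu, mul_assoc]
        have hcq : (starRingEnd ℂ) q * q = ((Complex.normSq q : ℝ) : ℂ) :=
          (Complex.normSq_eq_conj_mul_self).symm
        rw [hcq, ← Complex.ofReal_mul, Complex.ofReal_re, Complex.normSq_eq_norm_sq, ← ha]
        field_simp
      simp only [Complex.sub_re, Complex.ofReal_re, hre] at this
      linarith
    -- conclude a ≤ Sq v
    by_contra hcon
    push_neg at hcon
    have hSnn := Sq_nonneg v
    rw [one_mul] at hcon
    set t : ℝ := (Sq v / a + 1) / 2 with htdef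
    have h1 : Sq v / a < 1 := (div_lt_one ha0).mpr hcon
    have h2 : 0 ≤ t := by positivity
    have h3 : t < 1 := by rw [htdef]; linarith
    have h4 : Sq v < t * a := by
      rw [htdef]
      have : Sq v / a * a = Sq v := div_mul_cancel₀ _ ha0.ne'
      nlinarith
    linarith [hle t h2 h3]

open scoped InnerProductSpace in
lemma norm_le_two_mul {n : ℕ} (C : Matrix (Fin n) (Fin n) ℂ) (c : ℝ) (hc : 0 ≤ c)
    (h : NRle C c) : ‖Matrix.toEuclideanCLM (𝕜 := ℂ) C‖ ≤ 2 * c := by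
  set T := Matrix.toEuclideanCLM (𝕜 := ℂ) C with hT
  have hSq : ∀ x : EuclideanSpace ℂ (Fin n), Sq (WithLp.equiv 2 _ x) = ‖x‖ ^ 2 := by
    intro x
    rw [EuclideanSpace.norm_eq, Real.sq_sqrt (Finset.sum_nonneg fun i _ => sq_nonneg _)]
    exact Finset.sum_congr rfl fun i _ => by
      rw [Complex.normSq_eq_norm_sq]; rfl
  have hquad : ∀ x : EuclideanSpace ℂ (Fin n), ‖⟪T x, x⟫_ℂ‖ ≤ c * ‖x‖ ^ 2 := by
    intro x
    have h1 : ⟪T x, x⟫_ℂ = star (WithLp.equiv 2 _ (T x)) ⬝ᵥ (WithLp.equiv 2 _ x) :=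
      by rw [EuclideanSpace.inner_eq_star_dotProduct, dotProduct_comm]; rfl
    have h2 : WithLp.equiv 2 _ (T x) = C.mulVec (WithLp.equiv 2 _ x) := by
      rw [hT]; exact Matrix.ofLp_toEuclideanCLM C x
    rw [h1, h2, Matrix.star_dotProduct]
    rw [norm_star]
    calc ‖star (WithLp.equiv 2 _ x) ⬝ᵥ C.mulVec (WithLp.equiv 2 _ x)‖
        = ‖star (WithLp.equiv 2 _ x) ⬝ᵥ C.mulVec (WithLp.equiv 2 _ x)‖ :=
          rfl
      _ ≤ c * Sq (WithLp.equiv 2 _ x) := h _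
      _ = c * ‖x‖ ^ 2 := by rw [hSq]
  have habs4 : ∀ a b e f : ℂ, ‖(a - b + Complex.I * e - Complex.I * f) / 4‖
      ≤ (‖a‖ + ‖b‖ + ‖e‖ + ‖f‖) / 4 := by
    intro a b e f
    rw [norm_div]
    have h4 : ‖(4 : ℂ)‖ = 4 := by norm_num
    rw [h4]
    have h1 : ‖a - b + Complex.I * e - Complex.I * f‖ ≤ ‖a‖ + ‖b‖ + ‖e‖ + ‖f‖ := by
      have i1 : ‖a - b + Complex.I * e - Complex.I * f‖
          ≤ ‖a - b + Complex.I * e‖ + ‖Complex.I * f‖ := norm_sub_le _ _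
      have i2 : ‖a - b + Complex.I * e‖ ≤ ‖a - b‖ + ‖Complex.I * e‖ := norm_add_le _ _
      have i3 : ‖a - b‖ ≤ ‖a‖ + ‖b‖ := norm_sub_le _ _
      have i4 : ‖Complex.I * e‖ = ‖e‖ := by rw [norm_mul, Complex.norm_I, one_mul]
      have i5 : ‖Complex.I * f‖ = ‖f‖ := by rw [norm_mul, Complex.norm_I, one_mul]
      linarith
    linarith
  have key : ∀ x y : EuclideanSpace ℂ (Fin n),
      ‖⟪T y, x⟫_ℂ‖ ≤ c * (‖x‖ ^ 2 + ‖y‖ ^ 2) := by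
    intro x y
    have hpol := inner_map_polarization (T : EuclideanSpace ℂ (Fin n) →ₗ[ℂ]
      EuclideanSpace ℂ (Fin n)) x y
    simp only [ContinuousLinearMap.coe_coe] at hpol
    rw [hpol]
    have hpar := parallelogram_law_with_norm ℂ x y
    have hpar2 := parallelogram_law_with_norm ℂ x (Complex.I • y)
    have hIy : ‖Complex.I • y‖ = ‖y‖ := by
      rw [norm_smul, Complex.norm_I, one_mul]
    rw [hIy] at hpar2
    have e1 := hquad (x + y)
    have e2 := hquad (x - y)
    have e3 := hquad (x + Complex.I • y)
    have e4 := hquad (x - Complex.I • y)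
    have hstep := habs4 (⟪T (x + y), x + y⟫_ℂ) (⟪T (x - y), x - y⟫_ℂ)
      (⟪T (x + Complex.I • y), x + Complex.I • y⟫_ℂ)
      (⟪T (x - Complex.I • y), x - Complex.I • y⟫_ℂ)
    refine le_trans hstep ?_
    nlinarith [sq_nonneg (‖x + y‖), sq_nonneg (‖x - y‖)]
  -- conclude operator norm bound
  apply ContinuousLinearMap.opNorm_le_bound _ (by positivity)
  intro y
  rcases eq_or_ne (T y) 0 with hTy | hTy
  · rw [hTy, norm_zero]; positivity
  · have hTy0 : (0:ℝ) < ‖T y‖ := norm_pos_iff.mpr hTy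
    set x : EuclideanSpace ℂ (Fin n) := ((‖y‖ / ‖T y‖ : ℝ) : ℂ) • T y with hx
    have hxnorm : ‖x‖ = ‖y‖ := by
      rw [hx, norm_smul]
      simp only [Complex.norm_real, Real.norm_eq_abs]
      rw [abs_of_nonneg (by positivity), div_mul_cancel₀ _ hTy0.ne']
    have hinner : ‖⟪T y, x⟫_ℂ‖ = ‖y‖ * ‖T y‖ := by
      rw [hx, inner_smul_right]
      rw [norm_mul]
      simp only [Complex.norm_real, Real.norm_eq_abs]
      rw [abs_of_nonneg (by positivity)]
      rw [@inner_self_eq_norm_sq_to_K ℂ]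
      rw [norm_pow, RCLike.norm_ofReal, abs_of_nonneg (norm_nonneg _)]
      field_simp
    have := key x y
    rw [hinner, hxnorm] at this
    have h2 : ‖T y‖ * ‖y‖ ≤ 2 * c * ‖y‖ * ‖y‖ := by nlinarith
    rcases eq_or_lt_of_le (norm_nonneg y) with hy0 | hy0
    · exfalso
      have : y = 0 := (norm_eq_zero.mp hy0.symm)
      rw [this, map_zero] at hTy
      exact hTy rfl
    · nlinarith [h2, hy0]

end BergerAux

/-- equation (1.5). For every `k`, `‖A^k‖ ≤ 2·(r(A))^k`, where `‖·‖`
is the spectral norm (the operator norm on Euclidean space) and `r(A)` is the numerical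
radius of `A`. -/
theorem power_bound_numerical_radius (n : ℕ) (A : Matrix (Fin n) (Fin n) ℂ)
    (rA : ℝ)
    (hrA : rA = sSup {x : ℝ | ∃ v : Fin n → ℂ, star v ⬝ᵥ v = 1 ∧
      x = ‖star v ⬝ᵥ A.mulVec v‖})
    (k : ℕ) :
    ‖Matrix.toEuclideanCLM (𝕜 := ℂ) (A ^ k)‖ ≤ 2 * rA ^ k := by
  set S : Set ℝ := {x : ℝ | ∃ v : Fin n → ℂ, star v ⬝ᵥ v = 1 ∧
      x = ‖star v ⬝ᵥ A.mulVec v‖} with hS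
  -- boundedness of the set
  have hbound : ∀ v : Fin n → ℂ, (∀ i, ‖v i‖ ≤ 1) →
      ‖star v ⬝ᵥ A.mulVec v‖ ≤ ∑ i, ∑ j, ‖A i j‖ := by
    intro v hv
    have h1 : star v ⬝ᵥ A.mulVec v = ∑ i, star (v i) * (A.mulVec v) i := by
      simp [dotProduct]
    rw [h1]
    refine le_trans (norm_sum_le _ _) (Finset.sum_le_sum fun i _ => ?_)
    have h2 : (A.mulVec v) i = ∑ j, A i j * v j := by simp [mulVec, dotProduct]
    have h3 : ‖(A.mulVec v) i‖ ≤ ∑ j, ‖A i j‖ := by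
      rw [h2]
      refine le_trans (norm_sum_le _ _) (Finset.sum_le_sum fun j _ => ?_)
      rw [norm_mul]
      calc ‖A i j‖ * ‖v j‖
          ≤ ‖A i j‖ * 1 := by
            exact mul_le_mul_of_nonneg_left (hv j) (norm_nonneg _)
        _ = ‖A i j‖ := mul_one _
    calc ‖star (v i) * (A.mulVec v) i‖ = ‖star (v i)‖ * ‖(A.mulVec v) i‖ := norm_mul _ _
      _ ≤ 1 * (∑ j, ‖A i j‖) := by
          apply mul_le_mul _ h3 (norm_nonneg _) zero_le_one
          rw [norm_star]
          exact hv i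
      _ = ∑ j, ‖A i j‖ := one_mul _
  have hbdd : BddAbove S := by
    refine ⟨∑ i, ∑ j, ‖A i j‖, ?_⟩
    rintro x ⟨v, hv1, rfl⟩
    have hSq1 : Sq v = 1 := by
      have := dot_star_self v
      rw [hv1] at this
      exact_mod_cast this.symm
    apply hbound
    intro i
    have hle : Complex.normSq (v i) ≤ 1 := by
      have := Finset.single_le_sum (f := fun i => Complex.normSq (v i))
        (fun i _ => Complex.normSq_nonneg _) (Finset.mem_univ i)
      rw [show (∑ i, Complex.normSq (v i)) = Sq v from rfl, hSq1] at this
      exact this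
    nlinarith [Complex.sq_norm (v i), norm_nonneg (v i)]
  have hrAnn : 0 ≤ rA := by
    by_cases hne : S.Nonempty
    · obtain ⟨x, hx⟩ := hne
      obtain ⟨v, hv1, hveq⟩ := hx
      have h0 : 0 ≤ x := hveq ▸ norm_nonneg _
      have h1 : x ≤ rA := by
        rw [hrA]
        exact le_csSup hbdd ⟨v, hv1, hveq⟩
      linarith
    · rw [Set.not_nonempty_iff_eq_empty] at hne
      rw [hrA, hne, Real.sSup_empty]
  have hNR : NRle A rA := by
    intro v
    by_cases hv : v = 0
    · subst hv
      simp only [star_zero, zero_dotProduct, norm_zero]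
      have : Sq (0 : Fin n → ℂ) = 0 := by simp [Sq]
      rw [this, mul_zero]
    · set s : ℝ := Real.sqrt (Sq v) with hs
      have hSqpos : 0 < Sq v := Sq_pos hv
      have hspos : 0 < s := Real.sqrt_pos.mpr hSqpos
      have hss : s * s = Sq v := Real.mul_self_sqrt (Sq_nonneg v)
      set u : Fin n → ℂ := ((s⁻¹ : ℝ) : ℂ) • v with hu
      have hu1 : star u ⬝ᵥ u = 1 := by
        rw [hu, star_smul, smul_dotProduct, dotProduct_smul, dot_star_self]
        simp only [star_trivial, RCLike.star_def, Complex.conj_ofReal, smul_eq_mul]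
        rw [← Complex.ofReal_mul, ← Complex.ofReal_mul]
        rw [show s⁻¹ * (s⁻¹ * Sq v) = (Sq v) / (s * s) by ring, hss]
        rw [div_self hSqpos.ne']
        norm_num
      have he : star u ⬝ᵥ A.mulVec u = ((s⁻¹ * s⁻¹ : ℝ) : ℂ) * (star v ⬝ᵥ A.mulVec v) := by
        rw [hu, star_smul, smul_dotProduct, mulVec_smul, dotProduct_smul]
        simp only [star_trivial, RCLike.star_def, Complex.conj_ofReal, smul_eq_mul]
        push_cast
        ring
      have hmem : ‖star u ⬝ᵥ A.mulVec u‖ ≤ rA := by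
        rw [hrA]
        exact le_csSup hbdd ⟨u, hu1, rfl⟩
      rw [he, norm_mul, Complex.norm_real, Real.norm_eq_abs,
        abs_of_nonneg (by positivity)] at hmem
      have hfin : ‖star v ⬝ᵥ A.mulVec v‖ = (s * s) *
          (s⁻¹ * s⁻¹ * ‖star v ⬝ᵥ A.mulVec v‖) := by
        field_simp
      rw [hfin, hss]
      calc Sq v * (s⁻¹ * s⁻¹ * ‖star v ⬝ᵥ A.mulVec v‖) ≤ Sq v * rA :=
            mul_le_mul_of_nonneg_left hmem (le_of_lt hSqpos)
        _ = rA * Sq v := mul_comm _ _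
  -- now the main proof
  rcases Nat.eq_zero_or_pos k with hk0 | hk
  · subst hk0
    rw [pow_zero, pow_zero, mul_one]
    have h1 : Matrix.toEuclideanCLM (𝕜 := ℂ) (1 : Matrix (Fin n) (Fin n) ℂ) = 1 := map_one _
    rw [h1]
    calc ‖(1 : EuclideanSpace ℂ (Fin n) →L[ℂ] EuclideanSpace ℂ (Fin n))‖ ≤ 1 :=
          ContinuousLinearMap.norm_id_le
      _ ≤ 2 := one_le_two
  rcases hrAnn.lt_or_eq with hrpos | hr0
  · -- rA > 0
    set B : Matrix (Fin n) (Fin n) ℂ := ((rA⁻¹ : ℝ) : ℂ) • A with hB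
    have hNRB : NRle B 1 := by
      intro v
      rw [hB, smul_mulVec, dotProduct_smul, smul_eq_mul, norm_mul,
        Complex.norm_real, Real.norm_eq_abs, abs_of_nonneg (by positivity)]
      calc rA⁻¹ * ‖star v ⬝ᵥ A.mulVec v‖ ≤ rA⁻¹ * (rA * Sq v) :=
            mul_le_mul_of_nonneg_left (hNR v) (by positivity)
        _ = 1 * Sq v := by field_simp
    have hP := nrle_pow hNRB hk
    have hNRk : NRle (A ^ k) (rA ^ k) := by
      intro v
      have h := hP v
      rw [hB, _root_.smul_pow, smul_mulVec, dotProduct_smul, smul_eq_mul,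
        norm_mul, norm_pow, Complex.norm_real, Real.norm_eq_abs,
        abs_of_nonneg (by positivity), one_mul] at h
      have hpow : (0:ℝ) < rA ^ k := by positivity
      have hfin : ‖star v ⬝ᵥ (A ^ k).mulVec v‖
          = rA ^ k * ((rA⁻¹) ^ k * ‖star v ⬝ᵥ (A ^ k).mulVec v‖) := by
        rw [← mul_assoc, ← mul_pow, mul_inv_cancel₀ hrpos.ne', one_pow, one_mul]
      rw [hfin]
      exact mul_le_mul_of_nonneg_left h (le_of_lt hpow)
    exact norm_le_two_mul _ _ (by positivity) hNRk
  · -- rA = 0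
    have hNR0 : NRle A 0 := by
      intro v
      have := hNR v
      rw [← hr0] at this
      simpa using this
    have hTA := norm_le_two_mul A 0 le_rfl hNR0
    rw [mul_zero] at hTA
    have hT0 : Matrix.toEuclideanCLM (𝕜 := ℂ) A = 0 := norm_le_zero_iff.mp hTA
    have hA0 : A = 0 := by
      have h0 : Matrix.toEuclideanCLM (𝕜 := ℂ) (0 : Matrix (Fin n) (Fin n) ℂ) = 0 := map_zero _
      exact EquivLike.injective _ (hT0.trans h0.symm)
    rw [hA0, zero_pow hk.ne', map_zero, norm_zero, ← hr0, zero_pow hk.ne', mul_zero]
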